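/- (A posteriori error estimate, unsteady case.) Let T > 0. Let A₁ ∈ ℝ^{N₁×N₁}, A₂ ∈ ℝ^{N₂×N₂} and C₁, C₂ ≥ 0 satisfy ‖exp(s A₁)‖₂ ≤ C₁ and ‖exp(s A₂)‖₂ ≤ C₂ for all s ∈ [0,T]. Let 0 < M < N₂, let Φ ∈ ℝ^{N₂×M} have orthonormal columns, let P ∈ ℝ^{N₂×M} be a selection matrix (columns distinct standard basis vectors of ℝ^{N₂}) with PᵀΦ invertible, let U ∈ ℝ^{M×N₁}, and set C₃ := ‖Φ (PᵀΦ)⁻¹ U‖₂. Suppose: (i) f₁ : [0,T] → ℝ^{N₁} and g₂ : [0,T] → ℝ^{N₂} are continuous; (ii) u₁ : [0,T] → ℝ^{N₁} satisfies u₁′(t) = A₁ u₁(t) + f₁(t); (iii) u_D : [0,T] → ℝ^{N₂} satisfies U u₁(t) = Pᵀ u_D(t) for all t ∈ [0,T]; (iv) ũ₂ : [0,T] → ℝ^{N₂} satisfies ũ₂′(t) = A₂ ũ₂(t) + g₂(t), and u₂(t) := ũ₂(t) + u_D(t). Let V₁ ∈ ℝ^{N₁×n₁}, V₂ ∈ ℝ^{N₂×n₂},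 let u_{n₁} : [0,T] → ℝ^{n₁} and ũ_{n₂} : [0,T] → ℝ^{n₂} be continuously differentiable, define the residuals r₁(t) := A₁ V₁ u_{n₁}(t) + f₁(t) − V₁ u_{n₁}′(t) and r₂(t) := A₂ V₂ ũ_{n₂}(t) + g₂(t) − V₂ ũ_{n₂}′(t), and define the reduced slave approximation w₂(t) := V₂ ũ_{n₂}(t) + Φ (PᵀΦ)⁻¹ U V₁ u_{n₁}(t). Then for every t ∈ [0,T]: ‖u₂(t) − w₂(t)‖₂ ≤ C₂ ‖ũ₂(0) − V₂ ũ_{n₂}(0)‖₂ + C₂ ∫₀ᵗ ‖r₂(τ)‖₂ dτ + ‖(PᵀΦ)⁻¹‖₂ · ‖u_D(t) − Φ Φᵀ u_D(t)‖₂ + C₁ C₃ ‖u₁(0) − V₁ u_{n₁}(0)‖₂ + C₁ C₃ ∫₀ᵗ ‖r₁(τ)‖₂ dτ. -/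

import Mathlib

open Matrix
open scoped Matrix.Norms.L2Operator

/-- Multiplication of a real matrix with a Euclidean vector, valued in Euclidean space
(so that `‖·‖` is the Euclidean 2-norm). -/
noncomputable def mulVecE {m n : ℕ} (A : Matrix (Fin m) (Fin n) ℝ)
    (x : EuclideanSpace ℝ (Fin n)) : EuclideanSpace ℝ (Fin m) :=
  Matrix.toEuclideanLin A x

/-- `P : ℝ^{N×M}` is a selection matrix: its `M` columns are distinct standard basis
vectors of `ℝ^N`. -/
def IsSelectionMatrix {N M : ℕ} (P : Matrix (Fin N) (Fin M) ℝ) : Prop :=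
  ∃ g : Fin M → Fin N, Function.Injective g ∧
    ∀ i j, P i j = if i = g j then (1 : ℝ) else 0

section Stmt11Aux
open scoped RealInnerProductSpace
open NormedSpace intervalIntegral
variable {k m n : ℕ}

lemma norm_mulVecE_le (A : Matrix (Fin m) (Fin n) ℝ) (x : EuclideanSpace ℝ (Fin n)) :
    ‖mulVecE A x‖ ≤ ‖A‖ * ‖x‖ :=
  Matrix.l2_opNorm_mulVec A x

lemma mulVecE_mulVecE (A : Matrix (Fin m) (Fin n) ℝ) (B : Matrix (Fin n) (Fin k) ℝ)
    (x : EuclideanSpace ℝ (Fin k)) : mulVecE A (mulVecE B x) = mulVecE (A * B) x := by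
  simp [mulVecE, Matrix.toEuclideanLin_apply, Matrix.mulVec_mulVec]

noncomputable def mCLMc (m n : ℕ) : Matrix (Fin m) (Fin n) ℝ →L[ℝ]
    (EuclideanSpace ℝ (Fin n) →L[ℝ] EuclideanSpace ℝ (Fin m)) :=
  LinearMap.toContinuousLinearMap
    ((LinearMap.toContinuousLinearMap :
        (EuclideanSpace ℝ (Fin n) →ₗ[ℝ] EuclideanSpace ℝ (Fin m)) ≃ₗ[ℝ] _).toLinearMap ∘ₗ
      (Matrix.toEuclideanLin :
        Matrix (Fin m) (Fin n) ℝ ≃ₗ[ℝ] _).toLinearMap)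

lemma mCLMc_apply (A : Matrix (Fin m) (Fin n) ℝ) (x : EuclideanSpace ℝ (Fin n)) :
    mCLMc m n A x = mulVecE A x := rfl

lemma hasDerivAt_mulVecE {B : ℝ → Matrix (Fin m) (Fin n) ℝ} {B' : Matrix (Fin m) (Fin n) ℝ}
    {x : ℝ → EuclideanSpace ℝ (Fin n)} {x' : EuclideanSpace ℝ (Fin n)} {t : ℝ}
    (hB : HasDerivAt B B' t) (hx : HasDerivAt x x' t) :
    HasDerivAt (fun τ => mulVecE (B τ) (x τ)) (mulVecE B' (x t) + mulVecE (B t) x') t :=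
  (((mCLMc m n).hasFDerivAt.comp_hasDerivAt t hB)).clm_apply hx

lemma hasDerivAt_mulVecE_const (A : Matrix (Fin m) (Fin n) ℝ)
    {x : ℝ → EuclideanSpace ℝ (Fin n)} {x' : EuclideanSpace ℝ (Fin n)} {t : ℝ}
    (hx : HasDerivAt x x' t) :
    HasDerivAt (fun τ => mulVecE A (x τ)) (mulVecE A x') t := by
  simpa [mulVecE] using hasDerivAt_mulVecE (hasDerivAt_const t A) hx

lemma duhamel (A : Matrix (Fin n) (Fin n) ℝ) (C T : ℝ) (hC : 0 ≤ C)
    (hexp : ∀ s ∈ Set.Icc (0 : ℝ) T, ‖NormedSpace.exp (s • A)‖ ≤ C)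
    (e r : ℝ → EuclideanSpace ℝ (Fin n)) (hr : ContinuousOn r (Set.Icc 0 T))
    (he : ∀ τ ∈ Set.Icc (0 : ℝ) T, HasDerivAt e (mulVecE A (e τ) + r τ) τ)
    (t : ℝ) (ht : t ∈ Set.Icc (0 : ℝ) T) :
    ‖e t‖ ≤ C * ‖e 0‖ + C * ∫ τ in (0 : ℝ)..t, ‖r τ‖ := by
  obtain ⟨ht0, htT⟩ := ht
  have hsub : Set.uIcc (0 : ℝ) t ⊆ Set.Icc 0 T := by
    rw [Set.uIcc_of_le ht0]
    exact Set.Icc_subset_Icc le_rfl htT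
  set E : ℝ → Matrix (Fin n) (Fin n) ℝ := fun τ => NormedSpace.exp ((t - τ) • A) with hE
  have hEd : ∀ τ : ℝ, HasDerivAt E (-(NormedSpace.exp ((t - τ) • A) * A)) τ := by
    intro τ
    have h1 : HasDerivAt (fun u : ℝ => NormedSpace.exp (u • A))
        (NormedSpace.exp ((t - τ) • A) * A) (t - τ) := hasDerivAt_exp_smul_const A (t - τ)
    have h2 : HasDerivAt (fun τ' : ℝ => t - τ') (-1 : ℝ) τ := (hasDerivAt_id τ).const_sub t
    have := h1.scomp τ h2
    simp only [neg_one_smul] at this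
    exact this
  have hEcont : Continuous E :=
    continuous_iff_continuousAt.2 fun τ => (hEd τ).continuousAt
  -- the integrand
  have hcont2 : ContinuousOn (fun τ => mulVecE (E τ) (r τ)) (Set.Icc 0 T) := by
    have : ContinuousOn (fun τ => (mCLMc n n (E τ) : EuclideanSpace ℝ (Fin n) →L[ℝ] _)) (Set.Icc 0 T) :=
      ((mCLMc n n).continuous.comp hEcont).continuousOn
    exact this.clm_apply hr
  have key : ∫ τ in (0 : ℝ)..t, mulVecE (E τ) (r τ) =
      e t - mulVecE (NormedSpace.exp (t • A)) (e 0) := by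
    have hderiv : ∀ τ ∈ Set.uIcc (0 : ℝ) t,
        HasDerivAt (fun τ => mulVecE (E τ) (e τ)) (mulVecE (E τ) (r τ)) τ := by
      intro τ hτ
      have h := hasDerivAt_mulVecE (hEd τ) (he τ (hsub hτ))
      have : mulVecE (-(NormedSpace.exp ((t - τ) • A) * A)) (e τ)
          + mulVecE (E τ) (mulVecE A (e τ) + r τ) = mulVecE (E τ) (r τ) := by
        have h3 : (Matrix.toEuclideanLin (NormedSpace.exp ((t - τ) • A) * A)) (e τ)
            = Matrix.toEuclideanLin (NormedSpace.exp ((t - τ) • A))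
              (Matrix.toEuclideanLin A (e τ)) := (mulVecE_mulVecE _ _ _).symm
        simp only [mulVecE, map_neg, map_add, LinearMap.neg_apply, hE]
        rw [h3]; abel
      rwa [this] at h
    have hint : IntervalIntegrable (fun τ => mulVecE (E τ) (r τ)) MeasureTheory.volume 0 t :=
      (hcont2.mono hsub).intervalIntegrable
    have := intervalIntegral.integral_eq_sub_of_hasDerivAt hderiv hint
    rw [this]
    have hEt : E t = 1 := by simp [hE, NormedSpace.exp_zero]
    have hE0 : E 0 = NormedSpace.exp (t • A) := by simp [hE]
    rw [hEt, hE0]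
    congr 1
    simp [mulVecE, Matrix.toEuclideanLin_apply]
  -- now the bound
  have h1 : e t = mulVecE (NormedSpace.exp (t • A)) (e 0) + ∫ τ in (0 : ℝ)..t, mulVecE (E τ) (r τ) := by
    rw [key]; abel
  calc ‖e t‖ ≤ ‖mulVecE (NormedSpace.exp (t • A)) (e 0)‖
        + ‖∫ τ in (0 : ℝ)..t, mulVecE (E τ) (r τ)‖ := by rw [h1]; exact norm_add_le _ _
    _ ≤ C * ‖e 0‖ + C * ∫ τ in (0 : ℝ)..t, ‖r τ‖ := by
        gcongr ?_ + ?_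
        · exact (norm_mulVecE_le _ _).trans
            (mul_le_mul_of_nonneg_right (hexp t ⟨ht0, htT⟩) (norm_nonneg _))
        · calc ‖∫ τ in (0 : ℝ)..t, mulVecE (E τ) (r τ)‖
              ≤ ∫ τ in (0 : ℝ)..t, ‖mulVecE (E τ) (r τ)‖ :=
                intervalIntegral.norm_integral_le_integral_norm ht0
            _ ≤ ∫ τ in (0 : ℝ)..t, C * ‖r τ‖ := by
                apply intervalIntegral.integral_mono_on ht0
                · exact (hcont2.mono hsub).norm.intervalIntegrable
                · exact (continuousOn_const.mul (hr.mono hsub).norm).intervalIntegrable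
                intro τ hτ
                have hτT : t - τ ∈ Set.Icc (0 : ℝ) T :=
                  ⟨by linarith [hτ.2], by linarith [hτ.1]⟩
                exact (norm_mulVecE_le _ _).trans
                  (mul_le_mul_of_nonneg_right (hexp _ hτT) (norm_nonneg _))
            _ = C * ∫ τ in (0 : ℝ)..t, ‖r τ‖ := intervalIntegral.integral_const_mul _ _


lemma inner_mulVecE_transpose (A : Matrix (Fin m) (Fin n) ℝ) (x : EuclideanSpace ℝ (Fin m))
    (y : EuclideanSpace ℝ (Fin n)) : ⟪mulVecE Aᵀ x, y⟫ = ⟪x, mulVecE A y⟫ := by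
  have h : Aᵀ = Aᴴ := by ext i j; simp [Matrix.conjTranspose_apply]
  rw [mulVecE, h, Matrix.toEuclideanLin_conjTranspose_eq_adjoint]
  exact LinearMap.adjoint_inner_left _ _ _

lemma mulVecE_one (x : EuclideanSpace ℝ (Fin n)) : mulVecE 1 x = x := by
  simp [mulVecE, Matrix.toEuclideanLin_apply]

/-- If `Φᵀ Φ = 1` then `Φ` preserves Euclidean norms. -/
lemma norm_mulVecE_iso {Φ : Matrix (Fin m) (Fin n) ℝ} (hΦ : Φᵀ * Φ = 1)
    (x : EuclideanSpace ℝ (Fin n)) : ‖mulVecE Φ x‖ = ‖x‖ := by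
  have h : ⟪mulVecE Φ x, mulVecE Φ x⟫ = ⟪x, x⟫ := by
    rw [← inner_mulVecE_transpose, mulVecE_mulVecE, hΦ, mulVecE_one]
  rw [real_inner_self_eq_norm_sq, real_inner_self_eq_norm_sq] at h
  calc ‖mulVecE Φ x‖ = Real.sqrt (‖mulVecE Φ x‖ ^ 2) := (Real.sqrt_sq (norm_nonneg _)).symm
    _ = Real.sqrt (‖x‖ ^ 2) := by rw [h]
    _ = ‖x‖ := Real.sqrt_sq (norm_nonneg _)


lemma mulVecE_sub (A : Matrix (Fin m) (Fin n) ℝ) (x y : EuclideanSpace ℝ (Fin n)) :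
    mulVecE A (x - y) = mulVecE A x - mulVecE A y := map_sub (Matrix.toEuclideanLin A) x y

lemma proj_norm_sq {N M : ℕ} (P : Matrix (Fin N) (Fin M) ℝ) (hPP : Pᵀ * P = 1)
    (z : EuclideanSpace ℝ (Fin N)) :
    ‖z - mulVecE (P * Pᵀ) z‖ ^ 2 = ‖z‖ ^ 2 - ‖mulVecE Pᵀ z‖ ^ 2 := by
  have h2 : ⟪mulVecE Pᵀ z, mulVecE Pᵀ z⟫ = ⟪z, mulVecE (P * Pᵀ) z⟫ := by
    rw [inner_mulVecE_transpose, mulVecE_mulVecE]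
  rw [norm_sub_sq_real]
  have h4 : ⟪z, mulVecE (P * Pᵀ) z⟫ = ‖mulVecE Pᵀ z‖ ^ 2 := by
    rw [← h2, real_inner_self_eq_norm_sq]
  have h5 : ‖mulVecE (P * Pᵀ) z‖ ^ 2 = ‖mulVecE Pᵀ z‖ ^ 2 := by
    have h6 : mulVecE (P * Pᵀ) z = mulVecE P (mulVecE Pᵀ z) := (mulVecE_mulVecE _ _ _).symm
    rw [h6, norm_mulVecE_iso hPP]
  rw [h4, h5]; ring

/-- DEIM projection error bound. -/
lemma deim {N M : ℕ} (hM : 0 < M) (Φ P : Matrix (Fin N) (Fin M) ℝ)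
    (hΦ : Φᵀ * Φ = 1) (hPP : Pᵀ * P = 1) (hinv : IsUnit (Pᵀ * Φ))
    (x : EuclideanSpace ℝ (Fin N)) :
    ‖x - mulVecE (Φ * (Pᵀ * Φ)⁻¹ * Pᵀ) x‖ ≤ ‖(Pᵀ * Φ)⁻¹‖ * ‖x - mulVecE (Φ * Φᵀ) x‖ := by
  set B := Pᵀ * Φ with hB
  have hdet : IsUnit B.det := (Matrix.isUnit_iff_isUnit_det B).mp hinv
  have hBl : B⁻¹ * B = 1 := Matrix.nonsing_inv_mul B hdet
  have hBr : B * B⁻¹ = 1 := Matrix.mul_nonsing_inv B hdet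
  set c := ‖B⁻¹‖ with hc
  -- c ≥ 1
  have hw_le : ∀ w : EuclideanSpace ℝ (Fin M), ‖w‖ ≤ c * ‖mulVecE B w‖ := by
    intro w
    calc ‖w‖ = ‖mulVecE B⁻¹ (mulVecE B w)‖ := by rw [mulVecE_mulVecE, hBl, mulVecE_one]
      _ ≤ c * ‖mulVecE B w‖ := norm_mulVecE_le _ _
  have hBcontr : ∀ w : EuclideanSpace ℝ (Fin M), ‖mulVecE B w‖ ≤ ‖w‖ := by
    intro w
    have h1 : ‖mulVecE B w‖ ^ 2 ≤ ‖mulVecE Φ w‖ ^ 2 := by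
      set z := mulVecE Φ w
      have hPz : mulVecE B w = mulVecE Pᵀ z := by rw [hB, ← mulVecE_mulVecE]
      have h3 := proj_norm_sq P hPP z
      have h6 : ‖mulVecE B w‖ = ‖mulVecE Pᵀ z‖ := by rw [hPz]
      rw [h6]
      nlinarith [sq_nonneg (‖z - mulVecE (P * Pᵀ) z‖), h3]
    have h2 : ‖mulVecE Φ w‖ = ‖w‖ := norm_mulVecE_iso hΦ w
    nlinarith [norm_nonneg (mulVecE B w), norm_nonneg w]
  have hc0 : (0 : ℝ) ≤ c := norm_nonneg _
  have hc1 : 1 ≤ c := by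
    set w0 : EuclideanSpace ℝ (Fin M) := EuclideanSpace.single ⟨0, hM⟩ (1 : ℝ) with hw0def
    have hw0 : ‖w0‖ = 1 := by simp [hw0def]
    have h1 := hw_le w0
    have h2 := hBcontr w0
    nlinarith [mul_le_mul_of_nonneg_left h2 hc0]
  -- reduce to y with Φᵀ y = 0
  set y := x - mulVecE (Φ * Φᵀ) x with hy
  have hkey : Φ * B⁻¹ * Pᵀ * Φ = Φ := by
    rw [Matrix.mul_assoc (Φ * B⁻¹) Pᵀ Φ, ← hB, Matrix.mul_assoc Φ B⁻¹ B, hBl, Matrix.mul_one]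
  have hred : x - mulVecE (Φ * B⁻¹ * Pᵀ) x = y - mulVecE (Φ * B⁻¹ * Pᵀ) y := by
    have h7 : mulVecE (Φ * B⁻¹ * Pᵀ) (mulVecE (Φ * Φᵀ) x) = mulVecE (Φ * Φᵀ) x := by
      rw [mulVecE_mulVecE]
      congr 1
      rw [← Matrix.mul_assoc, hkey]
    rw [hy, mulVecE_sub, h7]
    abel
  set w := mulVecE (B⁻¹ * Pᵀ) y with hwdef
  have hΦw : mulVecE (Φ * B⁻¹ * Pᵀ) y = mulVecE Φ w := by
    rw [hwdef, mulVecE_mulVecE, Matrix.mul_assoc]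
  have hΦy : mulVecE Φᵀ y = 0 := by
    rw [hy, mulVecE_sub, mulVecE_mulVecE]
    have h8 : Φᵀ * (Φ * Φᵀ) = Φᵀ := by rw [← Matrix.mul_assoc, hΦ, Matrix.one_mul]
    rw [h8, sub_self]
  have hinner0 : ⟪y, mulVecE Φ w⟫ = 0 := by
    rw [← inner_mulVecE_transpose, hΦy, inner_zero_left]
  set e := y - mulVecE Φ w with hedef
  have hnw : ‖mulVecE Φ w‖ = ‖w‖ := norm_mulVecE_iso hΦ w
  have hE2 : ‖e‖ ^ 2 = ‖y‖ ^ 2 + ‖w‖ ^ 2 := by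
    rw [hedef, norm_sub_sq_real, hinner0, hnw]; ring
  have hPe : mulVecE Pᵀ e = 0 := by
    have h9 : mulVecE Pᵀ (mulVecE Φ w) = mulVecE Pᵀ y := by
      rw [mulVecE_mulVecE, ← hB, hwdef, mulVecE_mulVecE,
        ← Matrix.mul_assoc, hBr, Matrix.one_mul]
    rw [hedef, mulVecE_sub, h9, sub_self]
  have hPPe : ∀ z : EuclideanSpace ℝ (Fin N), ⟪e, mulVecE (P * Pᵀ) z⟫ = 0 := by
    intro z
    have h10 : mulVecE (P * Pᵀ) z = mulVecE P (mulVecE Pᵀ z) := (mulVecE_mulVecE _ _ _).symm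
    rw [h10, ← inner_mulVecE_transpose, hPe, inner_zero_left]
  set z := mulVecE Φ w with hzdef
  have hw2 : ‖w‖ ^ 2 = -⟪e, z⟫ := by
    have h11 : ⟪z - y, z⟫ = ‖w‖ ^ 2 := by
      rw [inner_sub_left, hinner0, real_inner_self_eq_norm_sq, hnw]
      ring
    have h12 : (z - y : EuclideanSpace ℝ (Fin N)) = -e := by rw [hedef]; abel
    rw [← h11, h12, inner_neg_left]
  have hcs : ‖w‖ ^ 2 ≤ ‖e‖ * ‖z - mulVecE (P * Pᵀ) z‖ := by
    have h13 : ‖w‖ ^ 2 = -⟪e, z - mulVecE (P * Pᵀ) z⟫ := by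
      rw [inner_sub_right, hPPe, hw2]; ring
    rw [h13]
    exact (neg_le_abs _).trans (abs_real_inner_le_norm _ _)
  have hs2 : ‖z - mulVecE (P * Pᵀ) z‖ ^ 2 = ‖w‖ ^ 2 - ‖mulVecE B w‖ ^ 2 := by
    rw [proj_norm_sq P hPP z, hzdef, norm_mulVecE_iso hΦ, mulVecE_mulVecE, ← hB]
  -- final inequality
  rw [hred, hΦw, ← hedef]
  set a := ‖w‖ with hadef
  set b := ‖mulVecE B w‖ with hbdef
  set s := ‖z - mulVecE (P * Pᵀ) z‖ with hsdef
  set Y := ‖y‖ with hYdef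
  set E := ‖e‖ with hEdef
  have hab : a ≤ c * b := hw_le w
  have ha0 : 0 ≤ a := hadef ▸ norm_nonneg _
  have hb0 : 0 ≤ b := hbdef ▸ norm_nonneg _
  have hs0 : 0 ≤ s := hsdef ▸ norm_nonneg _
  have hY0 : 0 ≤ Y := hYdef ▸ norm_nonneg _
  have hE0 : 0 ≤ E := hEdef ▸ norm_nonneg _
  clear_value a b s Y E
  clear hw_le hBcontr hPPe hPe hΦy hinner0 hw2 hred hΦw hkey hedef hzdef hwdef hy hnw
  clear hadef hbdef hsdef hYdef hEdef hB hc hBl hBr hdet hinv hΦ hPP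
  clear_value c
  clear e z w y B Φ P x
  rcases eq_or_lt_of_le ha0 with ha | ha
  · -- a = 0
    have hEY2 : E ^ 2 = Y ^ 2 := by nlinarith [hE2]
    have hEY : E = Y := by
      calc E = Real.sqrt (E ^ 2) := (Real.sqrt_sq hE0).symm
        _ = Real.sqrt (Y ^ 2) := by rw [hEY2]
        _ = Y := Real.sqrt_sq hY0
    rw [hEY]
    exact le_mul_of_one_le_left hY0 hc1
  · have hsq : E ^ 2 ≤ (c * Y) ^ 2 := by
      have h4 : a ^ 2 * a ^ 2 ≤ (E * s) * (E * s) :=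
        mul_le_mul hcs hcs (sq_nonneg a) (mul_nonneg hE0 hs0)
      have h5 : a ^ 2 ≤ c ^ 2 * b ^ 2 := by nlinarith [hab, hb0, hc0]
      have h4c : a ^ 2 * a ^ 2 ≤ E ^ 2 * a ^ 2 - E ^ 2 * b ^ 2 := by
        nlinarith [h4, hs2, sq_nonneg E]
      have h6 : c ^ 2 * a ^ 2 * E ^ 2 = c ^ 2 * a ^ 2 * (Y ^ 2 + a ^ 2) := by rw [hE2]
      nlinarith [mul_le_mul_of_nonneg_left h4c (sq_nonneg c),
        mul_le_mul_of_nonneg_left h5 (sq_nonneg E), h6, mul_pos ha ha]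
    calc E = Real.sqrt (E ^ 2) := (Real.sqrt_sq hE0).symm
      _ ≤ Real.sqrt ((c * Y) ^ 2) := Real.sqrt_le_sqrt hsq
      _ = c * Y := Real.sqrt_sq (by positivity)

end Stmt11Aux

/-- A posteriori error estimate for the unsteady one-way coupled ROM
(`ũ₂` is written `ut₂`, `ũ_{n₂}` is written `utn₂`):
`‖u₂(t) − w₂(t)‖₂ ≤ C₂‖ũ₂(0) − V₂ũ_{n₂}(0)‖₂ + C₂∫₀ᵗ‖r₂‖₂ + ‖(PᵀΦ)⁻¹‖₂‖u_D(t) − ΦΦᵀu_D(t)‖₂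
 + C₁C₃‖u₁(0) − V₁u_{n₁}(0)‖₂ + C₁C₃∫₀ᵗ‖r₁‖₂`. -/
theorem stmt11 {N₁ N₂ M n₁ n₂ : ℕ} (T : ℝ) (hT : 0 < T)
    (A₁ : Matrix (Fin N₁) (Fin N₁) ℝ) (A₂ : Matrix (Fin N₂) (Fin N₂) ℝ)
    (C₁ C₂ : ℝ) (hC₁ : 0 ≤ C₁) (hC₂ : 0 ≤ C₂)
    (hexp₁ : ∀ s ∈ Set.Icc (0 : ℝ) T, ‖NormedSpace.exp (s • A₁)‖ ≤ C₁)
    (hexp₂ : ∀ s ∈ Set.Icc (0 : ℝ) T, ‖NormedSpace.exp (s • A₂)‖ ≤ C₂)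
    (hM : 0 < M) (hMN : M < N₂)
    (Φ P : Matrix (Fin N₂) (Fin M) ℝ)
    (hΦ : Φᵀ * Φ = 1)
    (hP : IsSelectionMatrix P)
    (hinv : IsUnit (Pᵀ * Φ))
    (U : Matrix (Fin M) (Fin N₁) ℝ)
    (C₃ : ℝ) (hC₃ : C₃ = ‖Φ * (Pᵀ * Φ)⁻¹ * U‖)
    (f₁ : ℝ → EuclideanSpace ℝ (Fin N₁)) (hf₁ : ContinuousOn f₁ (Set.Icc 0 T))
    (g₂ : ℝ → EuclideanSpace ℝ (Fin N₂)) (hg₂ : ContinuousOn g₂ (Set.Icc 0 T))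
    (u₁ : ℝ → EuclideanSpace ℝ (Fin N₁))
    (hu₁ : ∀ t ∈ Set.Icc (0 : ℝ) T, HasDerivAt u₁ (mulVecE A₁ (u₁ t) + f₁ t) t)
    (uD : ℝ → EuclideanSpace ℝ (Fin N₂))
    (huD : ∀ t ∈ Set.Icc (0 : ℝ) T, mulVecE U (u₁ t) = mulVecE Pᵀ (uD t))
    (ut₂ : ℝ → EuclideanSpace ℝ (Fin N₂))
    (hut₂ : ∀ t ∈ Set.Icc (0 : ℝ) T, HasDerivAt ut₂ (mulVecE A₂ (ut₂ t) + g₂ t) t)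
    (u₂ : ℝ → EuclideanSpace ℝ (Fin N₂)) (hu₂ : ∀ t : ℝ, u₂ t = ut₂ t + uD t)
    (V₁ : Matrix (Fin N₁) (Fin n₁) ℝ) (V₂ : Matrix (Fin N₂) (Fin n₂) ℝ)
    (un₁ un₁' : ℝ → EuclideanSpace ℝ (Fin n₁))
    (hun₁ : ∀ t ∈ Set.Icc (0 : ℝ) T, HasDerivAt un₁ (un₁' t) t)
    (hun₁' : ContinuousOn un₁' (Set.Icc 0 T))
    (utn₂ utn₂' : ℝ → EuclideanSpace ℝ (Fin n₂))
    (hutn₂ : ∀ t ∈ Set.Icc (0 : ℝ) T, HasDerivAt utn₂ (utn₂' t) t)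
    (hutn₂' : ContinuousOn utn₂' (Set.Icc 0 T))
    (r₁ : ℝ → EuclideanSpace ℝ (Fin N₁))
    (hr₁ : ∀ t : ℝ, r₁ t = mulVecE A₁ (mulVecE V₁ (un₁ t)) + f₁ t - mulVecE V₁ (un₁' t))
    (r₂ : ℝ → EuclideanSpace ℝ (Fin N₂))
    (hr₂ : ∀ t : ℝ, r₂ t = mulVecE A₂ (mulVecE V₂ (utn₂ t)) + g₂ t - mulVecE V₂ (utn₂' t))
    (w₂ : ℝ → EuclideanSpace ℝ (Fin N₂))
    (hw₂ : ∀ t : ℝ, w₂ t = mulVecE V₂ (utn₂ t) + mulVecE (Φ * (Pᵀ * Φ)⁻¹ * U * V₁) (un₁ t)) :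
    ∀ t ∈ Set.Icc (0 : ℝ) T,
      ‖u₂ t - w₂ t‖ ≤
        C₂ * ‖ut₂ 0 - mulVecE V₂ (utn₂ 0)‖ + C₂ * (∫ τ in (0 : ℝ)..t, ‖r₂ τ‖)
        + ‖(Pᵀ * Φ)⁻¹‖ * ‖uD t - mulVecE (Φ * Φᵀ) (uD t)‖
        + C₁ * C₃ * ‖u₁ 0 - mulVecE V₁ (un₁ 0)‖
        + C₁ * C₃ * ∫ τ in (0 : ℝ)..t, ‖r₁ τ‖ := by
  intro t ht
  classical
  obtain ⟨g, hg, hgP⟩ := hP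
  have hPP : Pᵀ * P = 1 := by
    ext i j
    simp only [Matrix.mul_apply, Matrix.transpose_apply, hgP, Matrix.one_apply, ite_mul,
      one_mul, zero_mul]
    rw [Finset.sum_ite_eq' Finset.univ (g i) (fun k => if k = g j then (1:ℝ) else 0)]
    simp [hg.eq_iff, eq_comm]
  have hC₃0 : 0 ≤ C₃ := hC₃ ▸ norm_nonneg _
  -- continuity of the reduced solutions and residuals
  have hun₁c : ContinuousOn un₁ (Set.Icc 0 T) := fun τ hτ =>
    (hun₁ τ hτ).continuousAt.continuousWithinAt
  have hutn₂c : ContinuousOn utn₂ (Set.Icc 0 T) := fun τ hτ =>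
    (hutn₂ τ hτ).continuousAt.continuousWithinAt
  have hmc : ∀ {a b : ℕ} (A : Matrix (Fin a) (Fin b) ℝ), Continuous (mulVecE A) :=
    fun A => (mCLMc _ _ A).continuous
  have hr₁c : ContinuousOn r₁ (Set.Icc 0 T) := by
    have : r₁ = fun τ => mulVecE A₁ (mulVecE V₁ (un₁ τ)) + f₁ τ - mulVecE V₁ (un₁' τ) :=
      funext hr₁
    rw [this]
    exact (((hmc A₁).comp_continuousOn ((hmc V₁).comp_continuousOn hun₁c)).add hf₁).sub
      ((hmc V₁).comp_continuousOn hun₁')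
  have hr₂c : ContinuousOn r₂ (Set.Icc 0 T) := by
    have : r₂ = fun τ => mulVecE A₂ (mulVecE V₂ (utn₂ τ)) + g₂ τ - mulVecE V₂ (utn₂' τ) :=
      funext hr₂
    rw [this]
    exact (((hmc A₂).comp_continuousOn ((hmc V₂).comp_continuousOn hutn₂c)).add hg₂).sub
      ((hmc V₂).comp_continuousOn hutn₂')
  -- the two error ODEs
  set e₁ : ℝ → EuclideanSpace ℝ (Fin N₁) := fun τ => u₁ τ - mulVecE V₁ (un₁ τ) with he₁def
  set e₂ : ℝ → EuclideanSpace ℝ (Fin N₂) := fun τ => ut₂ τ - mulVecE V₂ (utn₂ τ) with he₂def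
  have he₁ : ∀ τ ∈ Set.Icc (0 : ℝ) T, HasDerivAt e₁ (mulVecE A₁ (e₁ τ) + r₁ τ) τ := by
    intro τ hτ
    have h := (hu₁ τ hτ).sub (hasDerivAt_mulVecE_const V₁ (hun₁ τ hτ))
    refine h.congr_deriv ?_
    rw [hr₁ τ]
    simp only [he₁def, mulVecE_sub, mulVecE_mulVecE]
    abel
  have he₂ : ∀ τ ∈ Set.Icc (0 : ℝ) T, HasDerivAt e₂ (mulVecE A₂ (e₂ τ) + r₂ τ) τ := by
    intro τ hτ
    have h := (hut₂ τ hτ).sub (hasDerivAt_mulVecE_const V₂ (hutn₂ τ hτ))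
    refine h.congr_deriv ?_
    rw [hr₂ τ]
    simp only [he₂def, mulVecE_sub, mulVecE_mulVecE]
    abel
  have hb₁ := duhamel A₁ C₁ T hC₁ hexp₁ e₁ r₁ hr₁c he₁ t ht
  have hb₂ := duhamel A₂ C₂ T hC₂ hexp₂ e₂ r₂ hr₂c he₂ t ht
  -- DEIM bound
  have hdeim := deim hM Φ P hΦ hPP hinv (uD t)
  -- splitting of the error
  have hsplit : u₂ t - w₂ t = e₂ t +
      ((uD t - mulVecE (Φ * (Pᵀ * Φ)⁻¹ * Pᵀ) (uD t)) +
        mulVecE (Φ * (Pᵀ * Φ)⁻¹ * U) (e₁ t)) := by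
    rw [hu₂ t, hw₂ t]
    have hUu : mulVecE (Φ * (Pᵀ * Φ)⁻¹ * U) (u₁ t) = mulVecE (Φ * (Pᵀ * Φ)⁻¹ * Pᵀ) (uD t) := by
      calc mulVecE (Φ * (Pᵀ * Φ)⁻¹ * U) (u₁ t)
          = mulVecE (Φ * (Pᵀ * Φ)⁻¹) (mulVecE U (u₁ t)) := (mulVecE_mulVecE _ _ _).symm
        _ = mulVecE (Φ * (Pᵀ * Φ)⁻¹) (mulVecE Pᵀ (uD t)) := by rw [huD t ht]
        _ = mulVecE (Φ * (Pᵀ * Φ)⁻¹ * Pᵀ) (uD t) := mulVecE_mulVecE _ _ _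
    have hV : mulVecE (Φ * (Pᵀ * Φ)⁻¹ * U * V₁) (un₁ t)
        = mulVecE (Φ * (Pᵀ * Φ)⁻¹ * U) (mulVecE V₁ (un₁ t)) := (mulVecE_mulVecE _ _ _).symm
    rw [hV]
    simp only [he₁def, he₂def, mulVecE_sub, hUu]
    abel
  have h3 : ‖mulVecE (Φ * (Pᵀ * Φ)⁻¹ * U) (e₁ t)‖ ≤ C₃ * ‖e₁ t‖ := by
    rw [hC₃]; exact norm_mulVecE_le _ _
  have h4 : ‖u₂ t - w₂ t‖ ≤ ‖e₂ t‖
      + (‖uD t - mulVecE (Φ * (Pᵀ * Φ)⁻¹ * Pᵀ) (uD t)‖ + C₃ * ‖e₁ t‖) := by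
    rw [hsplit]
    exact (norm_add_le _ _).trans (by gcongr; exact (norm_add_le _ _).trans (by gcongr))
  have h5 : C₃ * ‖e₁ t‖ ≤ C₃ * (C₁ * ‖e₁ 0‖ + C₁ * ∫ τ in (0:ℝ)..t, ‖r₁ τ‖) :=
    mul_le_mul_of_nonneg_left hb₁ hC₃0
  have h6 : e₁ 0 = u₁ 0 - mulVecE V₁ (un₁ 0) := rfl
  have h7 : e₂ 0 = ut₂ 0 - mulVecE V₂ (utn₂ 0) := rfl
  rw [h6] at hb₁ h5
  rw [h7] at hb₂
  have h8 : ‖uD t - mulVecE (Φ * (Pᵀ * Φ)⁻¹ * Pᵀ) (uD t)‖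
      ≤ ‖(Pᵀ * Φ)⁻¹‖ * ‖uD t - mulVecE (Φ * Φᵀ) (uD t)‖ := hdeim
  nlinarith [h4, hb₂, h5, h8, hC₃0]
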